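/- The circulant graph C(21;1,2) admits no 2-bounded optimal independent broadcast: β_b(C(21;1,2)) ≥ 9, but every independent broadcast f on C(21;1,2) with f(v) ≤ 2 for all v satisfies σ(f) ≤ 8. -/

import Mathlib

/-- The eccentricity of a vertex: maximum distance to any other vertex. -/
noncomputable def eccent {V : Type*} [Fintype V] (G : SimpleGraph V) (v : V) : ℕ :=
  Finset.univ.sup (fun u => G.dist v u)

/-- The diameter of a finite graph: maximum eccentricity. -/
noncomputable def graphDiam {V : Type*} [Fintype V] (G : SimpleGraph V) : ℕ :=
  Finset.univ.sup (fun v => eccent G v)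

/-- `f` is an independent broadcast on `G`. -/
def IsIndepBroadcast {V : Type*} [Fintype V] (G : SimpleGraph V) (f : V → ℕ) : Prop :=
  (∀ v, f v ≤ eccent G v) ∧
  ∀ u v : V, u ≠ v → 0 < f u → 0 < f v → max (f u) (f v) < G.dist u v

/-- The broadcast independence number: maximum cost of an independent broadcast. -/
noncomputable def betaB {V : Type*} [Fintype V] (G : SimpleGraph V) : ℕ :=
  sSup {k | ∃ f : V → ℕ, IsIndepBroadcast G f ∧ ∑ v, f v = k}

/-- The independence number: maximum size of an independent set. -/
noncomputable def alphaNum {V : Type*} [Fintype V] (G : SimpleGraph V) : ℕ :=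
  sSup {k | ∃ s : Finset V, (∀ u ∈ s, ∀ v ∈ s, ¬ G.Adj u v) ∧ s.card = k}

/-- The circulant graph `C(n;1,a)` on vertices `v_0,…,v_{n-1}` with edges
`v_i v_{i+1}` and `v_i v_{i+a}`, indices mod `n`. -/
def circulantGraph (n a : ℕ) : SimpleGraph (Fin n) :=
  SimpleGraph.fromRel (fun i j => (i.val + 1) % n = j.val ∨ (i.val + a) % n = j.val)

lemma adj_add1 (j : Fin 21) : (circulantGraph 21 2).Adj j (j + 1) := by
  simp only [circulantGraph, SimpleGraph.fromRel_adj]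
  revert j; decide

lemma adj_add2 (j : Fin 21) : (circulantGraph 21 2).Adj j (j + 2) := by
  simp only [circulantGraph, SimpleGraph.fromRel_adj]
  revert j; decide

lemma adj_diff {u v : Fin 21} (h : (circulantGraph 21 2).Adj u v) :
    ∃ z : ℤ, z.natAbs ≤ 2 ∧ (v.val : ZMod 21) = (u.val : ZMod 21) + z := by
  simp only [circulantGraph, SimpleGraph.fromRel_adj] at h
  obtain ⟨-, h⟩ := h
  rcases h with (h | h) | (h | h)
  · exact ⟨1, by norm_num, by rw [← h, ZMod.natCast_mod]; push_cast; ring⟩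
  · exact ⟨2, by norm_num, by rw [← h, ZMod.natCast_mod]; push_cast; ring⟩
  · refine ⟨-1, by norm_num, ?_⟩
    have : (u.val : ZMod 21) = (v.val : ZMod 21) + 1 := by
      rw [← h, ZMod.natCast_mod]; push_cast; ring
    rw [this]; push_cast; ring
  · refine ⟨-2, by norm_num, ?_⟩
    have : (u.val : ZMod 21) = (v.val : ZMod 21) + 2 := by
      rw [← h, ZMod.natCast_mod]; push_cast; ring
    rw [this]; push_cast; ring

lemma walk_diff {u v : Fin 21} (w : (circulantGraph 21 2).Walk u v) :
    ∃ z : ℤ, z.natAbs ≤ 2 * w.length ∧ (v.val : ZMod 21) = (u.val : ZMod 21) + z := by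
  induction w with
  | nil => exact ⟨0, by simp, by simp⟩
  | cons h p ih =>
    obtain ⟨z1, hz1, he1⟩ := adj_diff h
    obtain ⟨z2, hz2, he2⟩ := ih
    refine ⟨z1 + z2, ?_, ?_⟩
    · have := Int.natAbs_add_le z1 z2
      simp only [SimpleGraph.Walk.length_cons]
      omega
    · rw [he2, he1]; push_cast; ring

lemma dist_big (u v : Fin 21) (hw : (circulantGraph 21 2).Reachable u v)
    (h : ∀ z : ℤ, z.natAbs ≤ 6 → (v.val : ZMod 21) ≠ (u.val : ZMod 21) + z) :
    3 < (circulantGraph 21 2).dist u v := by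
  by_contra hle
  push_neg at hle
  obtain ⟨p, hp⟩ := hw.exists_walk_length_eq_dist
  obtain ⟨z, hz, he⟩ := walk_diff p
  exact h z (by omega) he

lemma reach7 (j : Fin 21) : (circulantGraph 21 2).Reachable j (j + 7) := by
  have e1 : j + 2 + 2 = j + 4 := by rw [add_assoc]; rfl
  have e2 : j + 4 + 2 = j + 6 := by rw [add_assoc]; rfl
  have e3 : j + 6 + 1 = j + 7 := by rw [add_assoc]; rfl
  have r1 := (adj_add2 j).reachable
  have r2 := (adj_add2 (j+2)).reachable
  have r3 := (adj_add2 (j+4)).reachable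
  have r4 := (adj_add1 (j+6)).reachable
  rw [e1] at r2; rw [e2] at r3; rw [e3] at r4
  exact ((r1.trans r2).trans r3).trans r4

lemma d07 : 3 < (circulantGraph 21 2).dist 0 7 := by
  have r : (circulantGraph 21 2).Reachable 0 7 := by
    have := reach7 0; rwa [show (0:Fin 21) + 7 = 7 by decide] at this
  refine dist_big 0 7 r ?_
  intro z hz heq
  have h1 : -6 ≤ z ∧ z ≤ 6 := by omega
  obtain ⟨h1, h2⟩ := h1
  interval_cases z <;> revert heq <;> decide

lemma d714 : 3 < (circulantGraph 21 2).dist 7 14 := by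
  have r : (circulantGraph 21 2).Reachable 7 14 := by
    have := reach7 7; rwa [show (7:Fin 21) + 7 = 14 by decide] at this
  refine dist_big 7 14 r ?_
  intro z hz heq
  have h1 : -6 ≤ z ∧ z ≤ 6 := by omega
  obtain ⟨h1, h2⟩ := h1
  interval_cases z <;> revert heq <;> decide

lemma d140 : 3 < (circulantGraph 21 2).dist 14 0 := by
  have r : (circulantGraph 21 2).Reachable 14 0 := by
    have := reach7 14; rwa [show (14:Fin 21) + 7 = 0 by decide] at this
  refine dist_big 14 0 r ?_
  intro z hz heq
  have h1 : -6 ≤ z ∧ z ≤ 6 := by omega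
  obtain ⟨h1, h2⟩ := h1
  interval_cases z <;> revert heq <;> decide

lemma part1 : 9 ≤ betaB (circulantGraph 21 2) := by
  classical
  set G := circulantGraph 21 2 with hG
  have e0 : 3 < G.dist 0 7 := d07
  have e1 : 3 < G.dist 7 14 := d714
  have e2 : 3 < G.dist 14 0 := d140
  have ecc0 : 3 ≤ eccent G 0 := by
    have h := Finset.le_sup (f := fun u => G.dist 0 u) (Finset.mem_univ (7 : Fin 21))
    unfold eccent
    omega
  have ecc7 : 3 ≤ eccent G 7 := by
    have h := Finset.le_sup (f := fun u => G.dist 7 u) (Finset.mem_univ (14 : Fin 21))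
    unfold eccent
    omega
  have ecc14 : 3 ≤ eccent G 14 := by
    have h := Finset.le_sup (f := fun u => G.dist 14 u) (Finset.mem_univ (0 : Fin 21))
    unfold eccent
    omega
  set f : Fin 21 → ℕ := fun v => if v = 0 ∨ v = 7 ∨ v = 14 then 3 else 0 with hf
  have hmem : (9:ℕ) ∈ {k | ∃ g : Fin 21 → ℕ, IsIndepBroadcast G g ∧ ∑ v, g v = k} := by
    refine ⟨f, ⟨?_, ?_⟩, ?_⟩
    · intro v
      by_cases h : v = 0 ∨ v = 7 ∨ v = 14
      · rcases h with rfl | rfl | rfl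
        · simpa [hf] using ecc0
        · simpa [hf] using ecc7
        · simpa [hf] using ecc14
      · simp [hf, h]
    · intro u v huv hu hv
      have hu' : u = 0 ∨ u = 7 ∨ u = 14 := by
        by_contra h; simp [hf, h] at hu
      have hv' : v = 0 ∨ v = 7 ∨ v = 14 := by
        by_contra h; simp [hf, h] at hv
      have hmax : max (f u) (f v) ≤ 3 := by
        rcases hu' with rfl | rfl | rfl <;> rcases hv' with rfl | rfl | rfl <;> simp [hf]
      have hd : 3 < G.dist u v := by
        rcases hu' with rfl | rfl | rfl <;> rcases hv' with rfl | rfl | rfl <;>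
          first
          | exact absurd rfl huv
          | assumption
          | (rw [SimpleGraph.dist_comm]; assumption)
      omega
    · show (∑ v : Fin 21, f v) = 9
      rw [hf]
      decide
  have hbdd : BddAbove {k | ∃ g : Fin 21 → ℕ, IsIndepBroadcast G g ∧ ∑ v, g v = k} := by
    refine ⟨∑ v, eccent G v, fun k hk => ?_⟩
    obtain ⟨g, hg, rfl⟩ := hk
    exact Finset.sum_le_sum fun v _ => hg.1 v
  exact le_csSup hbdd hmem

lemma part2 (f : Fin 21 → ℕ) (hf : IsIndepBroadcast (circulantGraph 21 2) f)
    (hb : ∀ v, f v ≤ 2) : (∑ v, f v) ≤ 8 := by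
  set G := circulantGraph 21 2 with hG
  have d1 : ∀ j : Fin 21, G.dist j (j+1) ≤ 1 := fun j => by
    simpa using SimpleGraph.dist_le (SimpleGraph.Walk.cons (adj_add1 j) SimpleGraph.Walk.nil)
  have d2 : ∀ j : Fin 21, G.dist j (j+2) ≤ 1 := fun j => by
    simpa using SimpleGraph.dist_le (SimpleGraph.Walk.cons (adj_add2 j) SimpleGraph.Walk.nil)
  have d3 : ∀ j : Fin 21, G.dist j (j+3) ≤ 2 := fun j => by
    have h2 : G.Adj (j+2) (j+3) := by
      have := adj_add1 (j+2)
      rwa [show j + 2 + 1 = j + 3 by rw [add_assoc]; rfl] at this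
    simpa using SimpleGraph.dist_le
      (SimpleGraph.Walk.cons (adj_add2 j) (SimpleGraph.Walk.cons h2 SimpleGraph.Walk.nil))
  have d4 : ∀ j : Fin 21, G.dist j (j+4) ≤ 2 := fun j => by
    have h2 : G.Adj (j+2) (j+4) := by
      have := adj_add2 (j+2)
      rwa [show j + 2 + 2 = j + 4 by rw [add_assoc]; rfl] at this
    simpa using SimpleGraph.dist_le
      (SimpleGraph.Walk.cons (adj_add2 j) (SimpleGraph.Walk.cons h2 SimpleGraph.Walk.nil))
  have hne : ∀ j : Fin 21, j ≠ j+1 ∧ j ≠ j+2 ∧ j ≠ j+3 ∧ j ≠ j+4 := by decide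
  have zero2 : ∀ j k : Fin 21, j ≠ j + k → G.dist j (j+k) ≤ 1 →
      f j = 0 ∨ f (j+k) = 0 := by
    intro j k hjk hd
    by_contra h
    push_neg at h
    have hlt := hf.2 j (j+k) hjk (Nat.pos_of_ne_zero h.1) (Nat.pos_of_ne_zero h.2)
    rw [Nat.max_lt] at hlt
    omega
  have one2 : ∀ j k : Fin 21, j ≠ j + k → G.dist j (j+k) ≤ 2 →
      f j = 0 ∨ f (j+k) = 0 ∨ (f j ≤ 1 ∧ f (j+k) ≤ 1) := by
    intro j k hjk hd
    by_cases h1 : f j = 0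
    · exact Or.inl h1
    by_cases h2 : f (j+k) = 0
    · exact Or.inr (Or.inl h2)
    have hlt := hf.2 j (j+k) hjk (Nat.pos_of_ne_zero h1) (Nat.pos_of_ne_zero h2)
    rw [Nat.max_lt] at hlt
    exact Or.inr (Or.inr ⟨by omega, by omega⟩)
  have win : ∀ i : Fin 21, f i + f (i+1) + f (i+2) + f (i+3) + f (i+4) ≤ 2 := by
    intro i
    have e12 : i + 1 + 1 = i + 2 := by rw [add_assoc]; rfl
    have e13 : i + 1 + 2 = i + 3 := by rw [add_assoc]; rfl
    have e14 : i + 1 + 3 = i + 4 := by rw [add_assoc]; rfl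
    have e23 : i + 2 + 1 = i + 3 := by rw [add_assoc]; rfl
    have e24 : i + 2 + 2 = i + 4 := by rw [add_assoc]; rfl
    have e34 : i + 3 + 1 = i + 4 := by rw [add_assoc]; rfl
    have h01 := zero2 i 1 (hne i).1 (d1 i)
    have h02 := zero2 i 2 (hne i).2.1 (d2 i)
    have h12 := zero2 (i+1) 1 (hne (i+1)).1 (d1 (i+1)); rw [e12] at h12
    have h13 := zero2 (i+1) 2 (hne (i+1)).2.1 (d2 (i+1)); rw [e13] at h13
    have h23 := zero2 (i+2) 1 (hne (i+2)).1 (d1 (i+2)); rw [e23] at h23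
    have h24 := zero2 (i+2) 2 (hne (i+2)).2.1 (d2 (i+2)); rw [e24] at h24
    have h34 := zero2 (i+3) 1 (hne (i+3)).1 (d1 (i+3)); rw [e34] at h34
    have h03 := one2 i 3 (hne i).2.2.1 (d3 i)
    have h04 := one2 i 4 (hne i).2.2.2 (d4 i)
    have h14 := one2 (i+1) 3 (hne (i+1)).2.2.1 (d3 (i+1)); rw [e14] at h14
    have b0 := hb i; have b1 := hb (i+1); have b2 := hb (i+2)
    have b3 := hb (i+3); have b4 := hb (i+4)
    omega
  have shift : ∀ k : Fin 21, (∑ i : Fin 21, f (i + k)) = ∑ v, f v :=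
    fun k => Fintype.sum_equiv (Equiv.addRight k) _ _ (fun i => rfl)
  have total : (∑ i : Fin 21, (f i + f (i+1) + f (i+2) + f (i+3) + f (i+4)))
      = 5 * ∑ v, f v := by
    simp only [Finset.sum_add_distrib, shift]
    ring
  have le42 : (∑ i : Fin 21, (f i + f (i+1) + f (i+2) + f (i+3) + f (i+4)))
      ≤ ∑ _i : Fin 21, 2 := Finset.sum_le_sum (fun i _ => win i)
  simp only [Finset.sum_const, Finset.card_univ, Fintype.card_fin, smul_eq_mul] at le42
  omega

theorem stmt9 :
    9 ≤ betaB (circulantGraph 21 2) ∧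
    ∀ f : Fin 21 → ℕ, IsIndepBroadcast (circulantGraph 21 2) f →
      (∀ v, f v ≤ 2) → (∑ v, f v) ≤ 8 := ⟨part1, part2⟩
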